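/- Let A be a finite-dimensional self-injective algebra over a field k, M a finite-dimensional A-module with no nonzero projective direct summands, and 0 → ΩM → P → M → 0 a projective cover of M. If top(P) ≅ soc(P) (e.g., A is symmetric), then soc(ΩM) ≅ top(M). -/

import Mathlib

/-- The socle of a module: the sum of all its simple submodules. -/
def moduleSocle (A : Type*) [Ring A] (M : Type*) [AddCommGroup M] [Module A M] :
    Submodule A M :=
  sSup {N : Submodule A M | IsSimpleModule A N}

section Aux

variable {A : Type*} [Ring A]

/-- Baer's criterion transfers along retracts. -/
theorem baer_of_retract {Q P' : Type*} [AddCommGroup Q] [Module A Q]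
    [AddCommGroup P'] [Module A P']
    (i : P' →ₗ[A] Q) (r : Q →ₗ[A] P') (h : r ∘ₗ i = LinearMap.id)
    (hQ : Module.Baer A Q) : Module.Baer A P' := by
  intro I g
  obtain ⟨g', hg'⟩ := hQ I (i ∘ₗ g)
  refine ⟨r ∘ₗ g', fun x mx => ?_⟩
  have h1 := hg' x mx
  have h2 := LinearMap.congr_fun h (g ⟨x, mx⟩)
  simp only [LinearMap.comp_apply] at h1 ⊢
  rw [h1]
  simpa using h2

theorem baer_of_equiv {Q P' : Type*} [AddCommGroup Q] [Module A Q]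
    [AddCommGroup P'] [Module A P'] (e : Q ≃ₗ[A] P') (hQ : Module.Baer A Q) :
    Module.Baer A P' :=
  baer_of_retract e.symm.toLinearMap e.toLinearMap (by ext x; simp) hQ

theorem baer_pi {n : ℕ} (hA : Module.Baer A A) : Module.Baer A (Fin n → A) := by
  intro I g
  choose g' hg' using fun j : Fin n => hA I ((LinearMap.proj j) ∘ₗ g)
  refine ⟨LinearMap.pi g', fun x mx => ?_⟩
  funext j
  simpa using hg' j x mx

theorem baer_of_finite_projective (P' : Type*) [AddCommGroup P'] [Module A P']
    [Module.Finite A P'] [Module.Projective A P'] (hA : Module.Baer A A) :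
    Module.Baer A P' := by
  obtain ⟨n, s, hs⟩ := Module.Finite.exists_fin (R := A) (M := P')
  have hσ : Function.Surjective (Fintype.linearCombination A s) := by
    rw [← LinearMap.range_eq_top, Fintype.range_linearCombination, hs]
  obtain ⟨i, hi⟩ := Module.projective_lifting_property
    (Fintype.linearCombination A s) LinearMap.id hσ
  exact baer_of_retract i (Fintype.linearCombination A s) hi (baer_pi hA)

theorem map_socle_eq {P' : Type*} [AddCommGroup P'] [Module A P'] (K : Submodule A P')
    (hK : ∀ S : Submodule A P', IsSimpleModule A S → S ≤ K) :
    Submodule.map K.subtype (moduleSocle A K) = moduleSocle A P' := by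
  apply le_antisymm
  · simp only [moduleSocle]
    rw [(Submodule.gc_map_comap K.subtype).l_sSup]
    apply iSup₂_le
    intro T hT
    haveI : IsSimpleModule A T := hT
    have : IsSimpleModule A (Submodule.map K.subtype T) :=
      IsSimpleModule.congr
        (Submodule.equivMapOfInjective K.subtype (Submodule.injective_subtype K) T).symm
    exact le_sSup this
  · simp only [moduleSocle]
    rw [(Submodule.gc_map_comap K.subtype).l_sSup]
    apply sSup_le
    intro S hS
    haveI : IsSimpleModule A S := hS
    have hSK := hK S hS
    have hmap : Submodule.map K.subtype (Submodule.comap K.subtype S) = S := by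
      rw [Submodule.map_comap_subtype, inf_eq_right.mpr hSK]
    have hsimple : IsSimpleModule A (Submodule.comap K.subtype S) :=
      IsSimpleModule.congr
        ((Submodule.equivMapOfInjective K.subtype (Submodule.injective_subtype K)
          (Submodule.comap K.subtype S)) ≪≫ₗ LinearEquiv.ofEq _ _ hmap)
    exact le_iSup₂_of_le (Submodule.comap K.subtype S) hsimple (le_of_eq hmap.symm)

end Aux

/-- Let `A` be a finite-dimensional self-injective algebra over a field
`k`, `M` a finite-dimensional `A`-module with no nonzero projective direct summands, and
`0 → ΩM → P → M → 0` a projective cover. If `top(P) ≅ soc(P)` (e.g. `A` symmetric), then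
`soc(ΩM) ≅ top(M)`. Here `ΩM = ker f`, `top(N) = N / J(A)·N`. -/
theorem stmt10 {k A M P : Type*} [Field k] [Ring A] [Algebra k A] [FiniteDimensional k A]
    [AddCommGroup M] [Module k M] [Module A M] [IsScalarTower k A M] [FiniteDimensional k M]
    [AddCommGroup P] [Module k P] [Module A P] [IsScalarTower k A P] [FiniteDimensional k P]
    (hselfinj : Module.Injective A A)
    (hM : ∀ N₁ N₂ : Submodule A M, IsCompl N₁ N₂ → Module.Projective A N₁ → N₁ = ⊥)
    (hP : Module.Projective A P)
    (f : P →ₗ[A] M) (hf : Function.Surjective f)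
    (hcover : LinearMap.ker f ≤ (⊥ : Ideal A).jacobson • (⊤ : Submodule A P))
    (htopsoc :
      Nonempty ((P ⧸ ((⊥ : Ideal A).jacobson • (⊤ : Submodule A P))) ≃ₗ[A] moduleSocle A P)) :
    Nonempty ((moduleSocle A (LinearMap.ker f)) ≃ₗ[A]
      (M ⧸ ((⊥ : Ideal A).jacobson • (⊤ : Submodule A M)))) := by
  classical
  haveI : Module.Projective A P := hP
  haveI : Module.Finite A P := Module.Finite.of_restrictScalars_finite k A P
  haveI : IsArtinian A P := isArtinian_of_tower k inferInstance
  haveI : IsNoetherian A P := isNoetherian_of_tower k inferInstance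
  have hAA : Module.Baer A A := Module.Baer.of_injective hselfinj
  have baerP : Module.Baer A P := baer_of_finite_projective P hAA
  -- abbreviation
  set J : Ideal A := (⊥ : Ideal A).jacobson with hJdef
  -- the top equivalence `P ⧸ JP ≃ M ⧸ JM`
  have hmapJ : Submodule.map f (J • (⊤ : Submodule A P)) = J • (⊤ : Submodule A M) := by
    rw [Submodule.map_smul'', Submodule.map_top, LinearMap.range_eq_top.mpr hf]
  have hcomap : Submodule.comap f (J • (⊤ : Submodule A M)) = J • (⊤ : Submodule A P) := by
    apply le_antisymm
    · intro x hx
      rw [Submodule.mem_comap, ← hmapJ] at hx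
      obtain ⟨y, hy, hxy⟩ := hx
      have hk : x - y ∈ LinearMap.ker f := by
        rw [LinearMap.mem_ker, map_sub, hxy, sub_self]
      have hxy2 := hcover hk
      have hx' : x = (x - y) + y := by abel
      rw [hx']
      exact Submodule.add_mem _ hxy2 hy
    · intro x hx
      rw [Submodule.mem_comap, ← hmapJ]
      exact Submodule.mem_map_of_mem hx
  have hq : Function.Surjective ⇑((J • (⊤ : Submodule A M)).mkQ ∘ₗ f) := by
    rw [LinearMap.coe_comp]
    exact (Submodule.mkQ_surjective _).comp hf
  have hkerq : LinearMap.ker ((J • (⊤ : Submodule A M)).mkQ ∘ₗ f)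
      = J • (⊤ : Submodule A P) := by
    rw [LinearMap.ker_comp, Submodule.ker_mkQ, hcomap]
  have e3 : (P ⧸ J • (⊤ : Submodule A P)) ≃ₗ[A] (M ⧸ J • (⊤ : Submodule A M)) :=
    (Submodule.quotEquivOfEq _ _ hkerq.symm) ≪≫ₗ
      (LinearMap.quotKerEquivOfSurjective _ hq)
  -- the key step: every simple submodule of `P` is contained in `ker f`
  have hsoc : ∀ S : Submodule A P, IsSimpleModule A S → S ≤ LinearMap.ker f := by
    intro S hS
    by_contra hSK
    haveI := hS
    have hatom : IsAtom S := isSimpleModule_iff_isAtom.mp hS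
    have hdisj : S ⊓ LinearMap.ker f = ⊥ := by
      rcases lt_or_eq_of_le (inf_le_left : S ⊓ LinearMap.ker f ≤ S) with h | h
      · exact hatom.2 _ h
      · exact absurd (h.symm.le.trans inf_le_right) hSK
    set fS := f.domRestrict S with hfSdef
    have hinj : Function.Injective fS := by
      rw [← LinearMap.ker_eq_bot, LinearMap.ker_domRestrict, Submodule.eq_bot_iff]
      rintro ⟨x, hxS⟩ hx
      simp only [Submodule.mem_comap, Submodule.coe_subtype, LinearMap.mem_ker] at hx
      have hx2 : x ∈ S ⊓ LinearMap.ker f := ⟨hxS, hx⟩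
      rw [hdisj, Submodule.mem_bot] at hx2
      exact Subtype.ext hx2
    set eS := LinearEquiv.ofInjective fS hinj with heSdef
    obtain ⟨g, hg⟩ := baerP.extension_property (LinearMap.range fS).subtype
      (Submodule.injective_subtype _) (S.subtype ∘ₗ eS.symm.toLinearMap)
    set π : Module.End A P := g ∘ₗ f with hπdef
    have hπS : ∀ x : P, x ∈ S → π x = x := by
      intro x hx
      have hmem : f x ∈ LinearMap.range fS := ⟨⟨x, hx⟩, rfl⟩
      have h1 : π x = S.subtype (eS.symm ⟨f x, hmem⟩) := by
        have h2 := LinearMap.congr_fun hg ⟨f x, hmem⟩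
        simpa [π] using h2
      have h3 : eS ⟨x, hx⟩ = ⟨f x, hmem⟩ := by
        apply Subtype.ext
        simp [eS, fS]
      rw [h1, ← h3, LinearEquiv.symm_apply_apply]
      rfl
    obtain ⟨n₀, hn₀⟩ := Filter.eventually_atTop.mp π.eventually_isCompl_ker_pow_range_pow
    set n := max n₀ 1 with hndef
    have hn1 : 1 ≤ n := le_max_right _ _
    have hcompl : IsCompl (LinearMap.ker (π ^ n)) (LinearMap.range (π ^ n)) :=
      hn₀ n (le_max_left _ _)
    set I := LinearMap.range (π ^ n) with hIdef
    have hπnS : ∀ x : P, x ∈ S → (π ^ n) x = x := by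
      intro x hx
      rw [Module.End.pow_apply]
      exact Function.iterate_fixed (hπS x hx) n
    have hSI : S ≤ I := fun x hx => ⟨x, hπnS x hx⟩
    have hIK : ∀ x : P, x ∈ I → f x = 0 → x = 0 := by
      intro x hxI hfx
      have hπx : π x = 0 := by
        rw [hπdef]
        simp [LinearMap.comp_apply, hfx]
      have hzero : (π ^ n) x = 0 := by
        obtain ⟨m, hm⟩ : ∃ m, n = m + 1 := ⟨n - 1, by omega⟩
        rw [hm, pow_succ, Module.End.mul_apply, hπx, map_zero]
      have hx2 : x ∈ LinearMap.ker (π ^ n) ⊓ I := ⟨hzero, hxI⟩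
      rwa [hcompl.disjoint.eq_bot, Submodule.mem_bot] at hx2
    set fI := f.domRestrict I with hfIdef
    have hinjI : Function.Injective fI := by
      rw [← LinearMap.ker_eq_bot, LinearMap.ker_domRestrict, Submodule.eq_bot_iff]
      rintro ⟨x, hxI⟩ hx
      simp only [Submodule.mem_comap, Submodule.coe_subtype, LinearMap.mem_ker] at hx
      exact Subtype.ext (hIK x hxI hx)
    set N := Submodule.map f I with hNdef
    have hrangeN : LinearMap.range fI = N := by
      rw [hfIdef, LinearMap.range_domRestrict, hNdef]
    have eN : (↥I) ≃ₗ[A] (↥N) :=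
      (LinearEquiv.ofInjective fI hinjI) ≪≫ₗ (LinearEquiv.ofEq _ _ hrangeN)
    have hretr : (Submodule.projectionOnto I (LinearMap.ker (π ^ n)) hcompl.symm)
        ∘ₗ I.subtype = LinearMap.id := by
      ext x
      simp
    have baerI : Module.Baer A I :=
      baer_of_retract I.subtype
        (Submodule.projectionOnto I (LinearMap.ker (π ^ n)) hcompl.symm) hretr baerP
    have baerN : Module.Baer A N := baer_of_equiv eN baerI
    obtain ⟨rN, hrN⟩ := baerN.extension_property N.subtype
      (Submodule.injective_subtype N) LinearMap.id
    have hcomplN : IsCompl N (LinearMap.ker rN) := by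
      constructor
      · rw [disjoint_iff, Submodule.eq_bot_iff]
        rintro x ⟨hxN, hxr⟩
        simp only [SetLike.mem_coe] at hxN hxr
        rw [LinearMap.mem_ker] at hxr
        have h4 := LinearMap.congr_fun hrN ⟨x, hxN⟩
        simp only [LinearMap.comp_apply, Submodule.coe_subtype, LinearMap.id_apply] at h4
        rw [hxr] at h4
        exact congrArg Subtype.val h4.symm
      · rw [codisjoint_iff, eq_top_iff]
        intro x _
        have h5 := LinearMap.congr_fun hrN (rN x)
        simp only [LinearMap.comp_apply, Submodule.coe_subtype, LinearMap.id_apply] at h5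
        have h6 : x - ↑(rN x) ∈ LinearMap.ker rN := by
          rw [LinearMap.mem_ker, map_sub, h5, sub_self]
        exact Submodule.mem_sup.mpr ⟨↑(rN x), (rN x).2, x - ↑(rN x), h6, by abel⟩
    have projI : Module.Projective A I :=
      Module.Projective.of_split I.subtype
        (Submodule.projectionOnto I (LinearMap.ker (π ^ n)) hcompl.symm) hretr
    have projN : Module.Projective A N := Module.Projective.of_equiv eN
    have hNbot : N = ⊥ := hM N (LinearMap.ker rN) hcomplN projN
    have hSbot : S = ⊥ := by
      rw [eq_bot_iff]
      intro x hx
      have hxI : x ∈ I := hSI hx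
      have hfx : f x ∈ N := Submodule.mem_map_of_mem hxI
      rw [hNbot, Submodule.mem_bot] at hfx
      rw [Submodule.mem_bot]
      exact hIK x hxI hfx
    exact hatom.1 hSbot
  -- assemble
  have hmapsoc : Submodule.map (LinearMap.ker f).subtype
      (moduleSocle A (LinearMap.ker f)) = moduleSocle A P :=
    map_socle_eq (LinearMap.ker f) hsoc
  have e1 : (moduleSocle A (LinearMap.ker f)) ≃ₗ[A] (moduleSocle A P) :=
    (Submodule.equivMapOfInjective (LinearMap.ker f).subtype
      (Submodule.injective_subtype _) (moduleSocle A (LinearMap.ker f))) ≪≫ₗ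
      LinearEquiv.ofEq _ _ hmapsoc
  exact ⟨e1 ≪≫ₗ htopsoc.some.symm ≪≫ₗ e3⟩
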